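/- Let {A_k : ℝ^m → ℝ^m, k ∈ ℤ} be a sequence of linear isomorphisms for which there is a constant N > 0 with ‖A_k‖ ≤ N and ‖A_k⁻¹‖ ≤ N for all k. Assume that the sequence {A_k} is hyperbolic on the ray [0, +∞), hyperbolic on the ray (−∞, 0], and that B⁺(𝒜) + B⁻(𝒜) = ℝ^m. Then for every bounded sequence {w_k ∈ ℝ^m, k ∈ ℤ} there exists a bounded sequence {v_k ∈ ℝ^m, k ∈ ℤ} such that v_{k+1} = A_k v_k + w_k for all k ∈ ℤ. -/
import Mathlib


open Filter Topology

/-- Transition map `Φ(k,l)` for `k = l + n`, `n ≥ 0`: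
`Φ(l+n+1, l) = A_{l+n} ∘ Φ(l+n, l)`. -/
noncomputable def PhiPos {m : ℕ}
    (A : ℤ → (EuclideanSpace ℝ (Fin m) ≃L[ℝ] EuclideanSpace ℝ (Fin m))) (l : ℤ) :
    ℕ → (EuclideanSpace ℝ (Fin m) →L[ℝ] EuclideanSpace ℝ (Fin m))
  | 0 => 1
  | n + 1 =>
      ((A (l + n) : EuclideanSpace ℝ (Fin m) →L[ℝ] EuclideanSpace ℝ (Fin m))).comp
        (PhiPos A l n)

/-- Transition map `Φ(k,l)` for `l = k + n`, `n ≥ 0`: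
`Φ(k, k+n+1) = Φ(k, k+n) ∘ A_{k+n}⁻¹`. -/
noncomputable def PhiNeg {m : ℕ}
    (A : ℤ → (EuclideanSpace ℝ (Fin m) ≃L[ℝ] EuclideanSpace ℝ (Fin m))) (k : ℤ) :
    ℕ → (EuclideanSpace ℝ (Fin m) →L[ℝ] EuclideanSpace ℝ (Fin m))
  | 0 => 1
  | n + 1 =>
      (PhiNeg A k n).comp
        (((A (k + n)).symm : EuclideanSpace ℝ (Fin m) →L[ℝ] EuclideanSpace ℝ (Fin m)))

/-- The transition maps `Φ(k,l)`: `Φ(k,l) = A_{k-1} ∘ ⋯ ∘ A_l` for `l < k`,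
`Φ(k,k) = Id`, and `Φ(k,l) = A_k⁻¹ ∘ ⋯ ∘ A_{l-1}⁻¹` for `l > k`. -/
noncomputable def Phi {m : ℕ}
    (A : ℤ → (EuclideanSpace ℝ (Fin m) ≃L[ℝ] EuclideanSpace ℝ (Fin m))) (k l : ℤ) :
    EuclideanSpace ℝ (Fin m) →L[ℝ] EuclideanSpace ℝ (Fin m) :=
  if l ≤ k then PhiPos A l (k - l).toNat else PhiNeg A k (l - k).toNat

/-- `B⁺(𝒜) = {v : ‖Φ(k,0)v‖ → 0 as k → +∞}`. -/
def Bplus {m : ℕ}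
    (A : ℤ → (EuclideanSpace ℝ (Fin m) ≃L[ℝ] EuclideanSpace ℝ (Fin m))) :
    Set (EuclideanSpace ℝ (Fin m)) :=
  {v | Tendsto (fun k : ℤ => ‖Phi A k 0 v‖) atTop (𝓝 0)}

/-- `B⁻(𝒜) = {v : ‖Φ(k,0)v‖ → 0 as k → -∞}`. -/
def Bminus {m : ℕ}
    (A : ℤ → (EuclideanSpace ℝ (Fin m) ≃L[ℝ] EuclideanSpace ℝ (Fin m))) :
    Set (EuclideanSpace ℝ (Fin m)) :=
  {v | Tendsto (fun k : ℤ => ‖Phi A k 0 v‖) atBot (𝓝 0)}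

/-- The sequence `𝒜` is hyperbolic on the ray `[0, +∞)`. -/
def HyperbolicOnPlusRay {m : ℕ}
    (A : ℤ → (EuclideanSpace ℝ (Fin m) ≃L[ℝ] EuclideanSpace ℝ (Fin m))) : Prop :=
  ∃ (C lam : ℝ)
    (P : ℤ → (EuclideanSpace ℝ (Fin m) →L[ℝ] EuclideanSpace ℝ (Fin m))),
    0 < C ∧ lam ∈ Set.Ioo (0 : ℝ) 1 ∧
    (∀ k : ℤ, 0 ≤ k → (P k).comp (P k) = P k) ∧
    (∀ k l : ℤ, 0 ≤ k → 0 ≤ l → (P k).comp (Phi A k l) = (Phi A k l).comp (P l)) ∧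
    (∀ k l : ℤ, 0 ≤ l → l ≤ k → ∀ v : EuclideanSpace ℝ (Fin m),
      ‖Phi A k l (P l v)‖ ≤ C * lam ^ (k - l).toNat * ‖v‖) ∧
    (∀ k l : ℤ, 0 ≤ k → k ≤ l → ∀ v : EuclideanSpace ℝ (Fin m),
      ‖Phi A k l ((1 - P l) v)‖ ≤ C * lam ^ (l - k).toNat * ‖v‖)

/-- The sequence `𝒜` is hyperbolic on the ray `(-∞, 0]`. -/
def HyperbolicOnMinusRay {m : ℕ}
    (A : ℤ → (EuclideanSpace ℝ (Fin m) ≃L[ℝ] EuclideanSpace ℝ (Fin m))) : Prop :=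
  ∃ (C lam : ℝ)
    (Q : ℤ → (EuclideanSpace ℝ (Fin m) →L[ℝ] EuclideanSpace ℝ (Fin m))),
    0 < C ∧ lam ∈ Set.Ioo (0 : ℝ) 1 ∧
    (∀ k : ℤ, k ≤ 0 → (Q k).comp (Q k) = Q k) ∧
    (∀ k l : ℤ, k ≤ 0 → l ≤ 0 → (Q k).comp (Phi A k l) = (Phi A k l).comp (Q l)) ∧
    (∀ k l : ℤ, l ≤ k → k ≤ 0 → ∀ v : EuclideanSpace ℝ (Fin m),
      ‖Phi A k l (Q l v)‖ ≤ C * lam ^ (k - l).toNat * ‖v‖) ∧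
    (∀ k l : ℤ, k ≤ l → l ≤ 0 → ∀ v : EuclideanSpace ℝ (Fin m),
      ‖Phi A k l ((1 - Q l) v)‖ ≤ C * lam ^ (l - k).toNat * ‖v‖)

section Aux

variable {m : ℕ} (A : ℤ → (EuclideanSpace ℝ (Fin m) ≃L[ℝ] EuclideanSpace ℝ (Fin m)))

lemma phiNeg_succ_apply (k : ℤ) (n : ℕ) (x : EuclideanSpace ℝ (Fin m)) :
    PhiNeg A k (n + 1) x = (A k).symm (PhiNeg A (k + 1) n x) := by
  induction n generalizing x with
  | zero => simp [PhiNeg]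
  | succ n ih =>
    have h1 : PhiNeg A k (n + 1 + 1) x
        = PhiNeg A k (n + 1) ((A (k + ((n : ℤ) + 1))).symm x) := by
      simp [PhiNeg]
    rw [h1, ih]
    have h2 : PhiNeg A (k + 1) (n + 1) x
        = PhiNeg A (k + 1) n ((A ((k + 1) + (n : ℤ))).symm x) := by
      simp [PhiNeg]
    rw [h2]
    have e : k + ((n : ℤ) + 1) = (k + 1) + (n : ℤ) := by ring
    rw [e]

lemma phi_self_apply (k : ℤ) (x : EuclideanSpace ℝ (Fin m)) : Phi A k k x = x := by
  simp only [Phi, if_pos le_rfl, sub_self, Int.toNat_zero]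
  rfl

lemma phi_succ_apply (k l : ℤ) (x : EuclideanSpace ℝ (Fin m)) :
    Phi A (k + 1) l x = A k (Phi A k l x) := by
  by_cases h : l ≤ k
  · have h' : l ≤ k + 1 := by omega
    simp only [Phi, if_pos h, if_pos h']
    have hn : (k + 1 - l).toNat = (k - l).toNat + 1 := by omega
    rw [hn]
    have e : l + (((k - l).toNat : ℕ) : ℤ) = k := by omega
    calc PhiPos A l ((k - l).toNat + 1) x
        = A (l + ((k - l).toNat : ℤ)) (PhiPos A l ((k - l).toNat) x) := rfl
      _ = A k (PhiPos A l ((k - l).toNat) x) := by rw [e]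
  · push_neg at h
    by_cases h2 : l ≤ k + 1
    · have hl : l = k + 1 := by omega
      subst hl
      simp only [Phi, if_pos le_rfl, if_neg (by omega : ¬ (k + 1 : ℤ) ≤ k)]
      have e1 : (k + 1 - (k + 1)).toNat = 0 := by omega
      have e2 : (k + 1 - k).toNat = 1 := by omega
      rw [e1, e2]
      have : PhiNeg A k 1 x = (A (k + ((0 : ℕ) : ℤ))).symm x := rfl
      rw [show (PhiPos A (k+1) 0 : _) x = x from rfl, this]
      simp
    · have h3 : k + 1 < l := by omega
      simp only [Phi, if_neg (by omega : ¬ l ≤ k + 1), if_neg (by omega : ¬ l ≤ k)]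
      have hn : (l - k).toNat = (l - (k + 1)).toNat + 1 := by omega
      rw [hn, phiNeg_succ_apply]
      simp

lemma tsum_norm_le_of_geom {E : Type*} [NormedAddCommGroup E] [CompleteSpace E]
    {f : ℕ → E} {B lam : ℝ} (h0 : 0 ≤ lam) (h1 : lam < 1)
    (hf : ∀ j, ‖f j‖ ≤ B * lam ^ j) : Summable f ∧ ‖∑' j, f j‖ ≤ B * (1 - lam)⁻¹ := by
  have hg : Summable (fun j : ℕ => B * lam ^ j) :=
    (summable_geometric_of_lt_one h0 h1).mul_left B
  have hs : Summable fun j => ‖f j‖ :=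
    Summable.of_nonneg_of_le (fun j => norm_nonneg _) hf hg
  refine ⟨hs.of_norm, ?_⟩
  calc ‖∑' j, f j‖ ≤ ∑' j, ‖f j‖ := norm_tsum_le_tsum_norm hs
    _ ≤ ∑' j, B * lam ^ j := Summable.tsum_le_tsum hf hs hg
    _ = B * (1 - lam)⁻¹ := by rw [tsum_mul_left, tsum_geometric_of_lt_one h0 h1]

lemma sum_geom_le {B lam : ℝ} (hB : 0 ≤ B) (h0 : 0 ≤ lam) (h1 : lam < 1) (n : ℕ) :
    ∑ j ∈ Finset.range n, B * lam ^ j ≤ B * (1 - lam)⁻¹ := by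
  have hg : Summable (fun j : ℕ => B * lam ^ j) :=
    (summable_geometric_of_lt_one h0 h1).mul_left B
  calc ∑ j ∈ Finset.range n, B * lam ^ j ≤ ∑' j : ℕ, B * lam ^ j :=
        Summable.sum_le_tsum _ (fun j _ => by positivity) hg
    _ = B * (1 - lam)⁻¹ := by rw [tsum_mul_left, tsum_geometric_of_lt_one h0 h1]

lemma bdd_of_tendsto_atTop (f : ℤ → ℝ) (hf : ∀ k, 0 ≤ f k)
    (h : Tendsto f atTop (𝓝 0)) : ∃ M : ℝ, 0 ≤ M ∧ ∀ k : ℤ, 0 ≤ k → f k ≤ M := by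
  obtain ⟨K, hK⟩ := eventually_atTop.mp (h.eventually (eventually_le_nhds one_pos))
  have hsn : (0:ℝ) ≤ ∑ i ∈ Finset.Icc (0:ℤ) K, f i := Finset.sum_nonneg fun i _ => hf i
  refine ⟨1 + ∑ i ∈ Finset.Icc (0:ℤ) K, f i, by linarith, fun k hk => ?_⟩
  by_cases hkK : K ≤ k
  · linarith [hK k hkK]
  · have hmem : k ∈ Finset.Icc (0:ℤ) K := by simp; omega
    have := Finset.single_le_sum (fun i _ => hf i) hmem
    linarith

lemma bdd_of_tendsto_atBot (f : ℤ → ℝ) (hf : ∀ k, 0 ≤ f k)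
    (h : Tendsto f atBot (𝓝 0)) : ∃ M : ℝ, 0 ≤ M ∧ ∀ k : ℤ, k ≤ 0 → f k ≤ M := by
  obtain ⟨K, hK⟩ := eventually_atBot.mp (h.eventually (eventually_le_nhds one_pos))
  have hsn : (0:ℝ) ≤ ∑ i ∈ Finset.Icc K (0:ℤ), f i := Finset.sum_nonneg fun i _ => hf i
  refine ⟨1 + ∑ i ∈ Finset.Icc K (0:ℤ), f i, by linarith, fun k hk => ?_⟩
  by_cases hkK : k ≤ K
  · linarith [hK k hkK]
  · have hmem : k ∈ Finset.Icc K (0:ℤ) := by simp; omega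
    have := Finset.single_le_sum (fun i _ => hf i) hmem
    linarith

end Aux

lemma mul_bound_aux {C W a b t : ℝ} (hC : 0 ≤ C) (hW : 0 ≤ W) (ht : t ≤ W)
    (hab : a ≤ b) (ha : 0 ≤ a) : C * a * t ≤ C * W * b := by
  have h1 : C * a * t ≤ C * a * W := mul_le_mul_of_nonneg_left ht (mul_nonneg hC ha)
  have h2 : C * a * W ≤ C * b * W :=
    mul_le_mul_of_nonneg_right (mul_le_mul_of_nonneg_left hab hC) hW
  calc C * a * t ≤ C * a * W := h1
    _ ≤ C * b * W := h2
    _ = C * W * b := by ring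

/-- If `{A_k}` is hyperbolic on both rays `[0,+∞)` and `(-∞,0]` and
`B⁺(𝒜) + B⁻(𝒜) = ℝ^m`, then for every bounded sequence `{w_k}` the equation
`v_{k+1} = A_k v_k + w_k` has a bounded solution `{v_k}`. -/
theorem bounded_solvability_of_hyperbolic_and_transverse
    {m : ℕ} (A : ℤ → (EuclideanSpace ℝ (Fin m) ≃L[ℝ] EuclideanSpace ℝ (Fin m)))
    (N : ℝ) (hN : 0 < N)
    (hA : ∀ k : ℤ, ‖(A k : EuclideanSpace ℝ (Fin m) →L[ℝ] EuclideanSpace ℝ (Fin m))‖ ≤ N)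
    (hAinv : ∀ k : ℤ,
      ‖((A k).symm : EuclideanSpace ℝ (Fin m) →L[ℝ] EuclideanSpace ℝ (Fin m))‖ ≤ N)
    (hplus : HyperbolicOnPlusRay A) (hminus : HyperbolicOnMinusRay A)
    (htrans : ∀ u : EuclideanSpace ℝ (Fin m), ∃ x ∈ Bplus A, ∃ y ∈ Bminus A, u = x + y) :
    ∀ w : ℤ → EuclideanSpace ℝ (Fin m), (∃ C : ℝ, ∀ k : ℤ, ‖w k‖ ≤ C) →
      ∃ v : ℤ → EuclideanSpace ℝ (Fin m), (∃ C : ℝ, ∀ k : ℤ, ‖v k‖ ≤ C) ∧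
        ∀ k : ℤ, v (k + 1) = A k (v k) + w k := by
  intro w hw
  obtain ⟨W, hW⟩ := hw
  have hW0 : 0 ≤ W := le_trans (norm_nonneg _) (hW 0)
  obtain ⟨C₁, l₁, P, hC₁, hl₁, -, -, hPs, hPu⟩ := hplus
  obtain ⟨C₂, l₂, Q, hC₂, hl₂, -, -, hQs, hQu⟩ := hminus
  have hl₁0 : (0:ℝ) ≤ l₁ := hl₁.1.le
  have hl₁1 : l₁ < 1 := hl₁.2
  have hl₂0 : (0:ℝ) ≤ l₂ := hl₂.1.le
  have hl₂1 : l₂ < 1 := hl₂.2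
  set S1 : ℤ → EuclideanSpace ℝ (Fin m) := fun k =>
    ∑ j ∈ Finset.range k.toNat, Phi A k ((j:ℤ)+1) (P ((j:ℤ)+1) (w j)) with hS1
  set S2 : ℤ → EuclideanSpace ℝ (Fin m) := fun k =>
    ∑' j : ℕ, Phi A k (k+1+(j:ℤ)) ((1 - P (k+1+(j:ℤ))) (w (k+(j:ℤ)))) with hS2
  set T1 : ℤ → EuclideanSpace ℝ (Fin m) := fun k =>
    ∑' j : ℕ, Phi A k (k-(j:ℤ)) (Q (k-(j:ℤ)) (w (k-(j:ℤ)-1))) with hT1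
  set T2 : ℤ → EuclideanSpace ℝ (Fin m) := fun k =>
    ∑ j ∈ Finset.range (-k).toNat, Phi A k (k+1+(j:ℤ)) ((1 - Q (k+1+(j:ℤ))) (w (k+(j:ℤ)))) with hT2
  -- pointwise geometric bounds for the two tsum families
  have hg2 : ∀ k : ℤ, 0 ≤ k → ∀ j : ℕ,
      ‖Phi A k (k+1+(j:ℤ)) ((1 - P (k+1+(j:ℤ))) (w (k+(j:ℤ))))‖ ≤ (C₁ * W) * l₁ ^ j := by
    intro k hk j
    have h := hPu k (k+1+(j:ℤ)) hk (by omega) (w (k+(j:ℤ)))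
    have he : (k+1+(j:ℤ) - k).toNat = j + 1 := by omega
    rw [he] at h
    have h3 : l₁ ^ (j+1) ≤ l₁ ^ j := pow_le_pow_of_le_one hl₁0 hl₁1.le (by omega)
    exact h.trans (mul_bound_aux hC₁.le hW0 (hW _) h3 (pow_nonneg hl₁0 (j+1)))
  have hg2S : ∀ k : ℤ, 0 ≤ k →
      Summable (fun j : ℕ => Phi A k (k+1+(j:ℤ)) ((1 - P (k+1+(j:ℤ))) (w (k+(j:ℤ))))) ∧
      ‖S2 k‖ ≤ (C₁ * W) * (1 - l₁)⁻¹ := by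
    intro k hk
    have := tsum_norm_le_of_geom hl₁0 hl₁1 (hg2 k hk)
    simpa only [hS2] using this
  have hh1 : ∀ k : ℤ, k ≤ 0 → ∀ j : ℕ,
      ‖Phi A k (k-(j:ℤ)) (Q (k-(j:ℤ)) (w (k-(j:ℤ)-1)))‖ ≤ (C₂ * W) * l₂ ^ j := by
    intro k hk j
    have h := hQs k (k-(j:ℤ)) (by omega) hk (w (k-(j:ℤ)-1))
    have he : (k - (k-(j:ℤ))).toNat = j := by omega
    rw [he] at h
    exact h.trans (mul_bound_aux hC₂.le hW0 (hW _) le_rfl (pow_nonneg hl₂0 j))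
  have hh1S : ∀ k : ℤ, k ≤ 0 →
      Summable (fun j : ℕ => Phi A k (k-(j:ℤ)) (Q (k-(j:ℤ)) (w (k-(j:ℤ)-1)))) ∧
      ‖T1 k‖ ≤ (C₂ * W) * (1 - l₂)⁻¹ := by
    intro k hk
    have := tsum_norm_le_of_geom hl₂0 hl₂1 (hh1 k hk)
    simpa only [hT1] using this
  -- bounds for the finite sums
  have hS1b : ∀ k : ℤ, 0 ≤ k → ‖S1 k‖ ≤ (C₁ * W) * (1 - l₁)⁻¹ := by
    intro k hk
    simp only [hS1]
    calc ‖∑ j ∈ Finset.range k.toNat, Phi A k ((j:ℤ)+1) (P ((j:ℤ)+1) (w j))‖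
        ≤ ∑ j ∈ Finset.range k.toNat, ‖Phi A k ((j:ℤ)+1) (P ((j:ℤ)+1) (w j))‖ :=
          norm_sum_le _ _
      _ ≤ ∑ j ∈ Finset.range k.toNat, (C₁ * W) * l₁ ^ (k.toNat - 1 - j) := by
          refine Finset.sum_le_sum ?_
          intro j hj
          have hj' : j < k.toNat := Finset.mem_range.mp hj
          have h := hPs k ((j:ℤ)+1) (by omega) (by omega) (w j)
          have he : (k - ((j:ℤ)+1)).toNat = k.toNat - 1 - j := by omega
          rw [he] at h
          exact h.trans (mul_bound_aux hC₁.le hW0 (hW _) le_rfl (pow_nonneg hl₁0 _))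
      _ = ∑ j ∈ Finset.range k.toNat, (C₁ * W) * l₁ ^ j :=
          Finset.sum_range_reflect (fun j => (C₁ * W) * l₁ ^ j) k.toNat
      _ ≤ (C₁ * W) * (1 - l₁)⁻¹ := sum_geom_le (by positivity) hl₁0 hl₁1 _
  have hT2b : ∀ k : ℤ, k ≤ 0 → ‖T2 k‖ ≤ (C₂ * W) * (1 - l₂)⁻¹ := by
    intro k hk
    simp only [hT2]
    calc ‖∑ j ∈ Finset.range (-k).toNat, Phi A k (k+1+(j:ℤ)) ((1 - Q (k+1+(j:ℤ))) (w (k+(j:ℤ))))‖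
        ≤ ∑ j ∈ Finset.range (-k).toNat,
            ‖Phi A k (k+1+(j:ℤ)) ((1 - Q (k+1+(j:ℤ))) (w (k+(j:ℤ))))‖ := norm_sum_le _ _
      _ ≤ ∑ j ∈ Finset.range (-k).toNat, (C₂ * W) * l₂ ^ j := by
          refine Finset.sum_le_sum ?_
          intro j hj
          have hj' : j < (-k).toNat := Finset.mem_range.mp hj
          have h := hQu k (k+1+(j:ℤ)) (by omega) (by omega) (w (k+(j:ℤ)))
          have he : (k+1+(j:ℤ) - k).toNat = j + 1 := by omega
          rw [he] at h
          have h3 : l₂ ^ (j+1) ≤ l₂ ^ j := pow_le_pow_of_le_one hl₂0 hl₂1.le (by omega)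
          exact h.trans (mul_bound_aux hC₂.le hW0 (hW _) h3 (pow_nonneg hl₂0 _))
      _ ≤ (C₂ * W) * (1 - l₂)⁻¹ := sum_geom_le (by positivity) hl₂0 hl₂1 _
  -- the correction vectors
  obtain ⟨x, hx, y, hy, hxy⟩ := htrans (-(S2 0) - T1 0)
  have hx' : Filter.Tendsto (fun k : ℤ => ‖Phi A k 0 x‖) Filter.atTop (nhds 0) := hx
  have hy' : Filter.Tendsto (fun k : ℤ => ‖Phi A k 0 y‖) Filter.atBot (nhds 0) := hy
  obtain ⟨Mx, hMx0, hMx⟩ := bdd_of_tendsto_atTop _ (fun k => norm_nonneg _) hx'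
  obtain ⟨My, hMy0, hMy⟩ := bdd_of_tendsto_atBot _ (fun k => norm_nonneg _) hy'
  -- the solution
  set v : ℤ → EuclideanSpace ℝ (Fin m) := fun k =>
    if 0 ≤ k then S1 k - S2 k - Phi A k 0 x else T1 k - T2 k + Phi A k 0 y with hv
  -- congruence helpers
  have congrP : ∀ (a l1 l2 i1 i2 : ℤ), l1 = l2 → i1 = i2 →
      Phi A a l1 ((1 - P l1) (w i1)) = Phi A a l2 ((1 - P l2) (w i2)) := by
    intro a l1 l2 i1 i2 h1 h2; rw [h1, h2]
  have congrQ1 : ∀ (a l1 l2 i1 i2 : ℤ), l1 = l2 → i1 = i2 →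
      Phi A a l1 (Q l1 (w i1)) = Phi A a l2 (Q l2 (w i2)) := by
    intro a l1 l2 i1 i2 h1 h2; rw [h1, h2]
  have congrQ2 : ∀ (a l1 l2 i1 i2 : ℤ), l1 = l2 → i1 = i2 →
      Phi A a l1 ((1 - Q l1) (w i1)) = Phi A a l2 ((1 - Q l2) (w i2)) := by
    intro a l1 l2 i1 i2 h1 h2; rw [h1, h2]
  -- recurrences
  have hrecS1 : ∀ k : ℤ, 0 ≤ k → S1 (k+1) = A k (S1 k) + P (k+1) (w k) := by
    intro k hk
    have hn : (k+1).toNat = k.toNat + 1 := by omega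
    simp only [hS1]
    rw [hn, Finset.sum_range_succ]
    have hlast : Phi A (k+1) (((k.toNat:ℕ):ℤ)+1) (P (((k.toNat:ℕ):ℤ)+1) (w (k.toNat:ℤ)))
        = P (k+1) (w k) := by
      have e : ((k.toNat:ℕ):ℤ) = k := Int.toNat_of_nonneg hk
      rw [e]
      exact phi_self_apply A (k+1) _
    rw [hlast]
    congr 1
    rw [map_sum]
    exact Finset.sum_congr rfl (fun j hj => phi_succ_apply A k ((j:ℤ)+1) _)
  have hrecS2 : ∀ k : ℤ, 0 ≤ k → A k (S2 k) = (w k - P (k+1) (w k)) + S2 (k+1) := by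
    intro k hk
    have hsumk := (hg2S k hk).1
    have hGsum : Summable (fun j : ℕ =>
        Phi A (k+1) (k+1+(j:ℤ)) ((1 - P (k+1+(j:ℤ))) (w (k+(j:ℤ))))) := by
      have hb : ∀ j : ℕ,
          ‖Phi A (k+1) (k+1+(j:ℤ)) ((1 - P (k+1+(j:ℤ))) (w (k+(j:ℤ))))‖ ≤ (C₁ * W) * l₁ ^ j := by
        intro j
        have h := hPu (k+1) (k+1+(j:ℤ)) (by omega) (by omega) (w (k+(j:ℤ)))
        have he : (k+1+(j:ℤ) - (k+1)).toNat = j := by omega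
        rw [he] at h
        exact h.trans (mul_bound_aux hC₁.le hW0 (hW _) le_rfl (pow_nonneg hl₁0 j))
      exact (tsum_norm_le_of_geom hl₁0 hl₁1 hb).1
    calc A k (S2 k)
        = ∑' j : ℕ, A k (Phi A k (k+1+(j:ℤ)) ((1 - P (k+1+(j:ℤ))) (w (k+(j:ℤ))))) := by
          simp only [hS2]; exact (A k).map_tsum
      _ = ∑' j : ℕ, Phi A (k+1) (k+1+(j:ℤ)) ((1 - P (k+1+(j:ℤ))) (w (k+(j:ℤ)))) :=
          tsum_congr fun j => (phi_succ_apply A k _ _).symm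
      _ = (w k - P (k+1) (w k)) + S2 (k+1) := by
          rw [Summable.tsum_eq_zero_add hGsum]
          congr 1
          · have e0 : Phi A (k+1) (k+1+((0:ℕ):ℤ)) ((1 - P (k+1+((0:ℕ):ℤ))) (w (k+((0:ℕ):ℤ))))
                = Phi A (k+1) (k+1) ((1 - P (k+1)) (w k)) :=
              congrP _ _ _ _ _ (by simp) (by simp)
            rw [e0, phi_self_apply]
            simp [ContinuousLinearMap.sub_apply]
          · simp only [hS2]
            exact tsum_congr fun j => congrP (k+1) _ _ _ _ (by push_cast; ring) (by push_cast; ring)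
  have hrecT1 : ∀ k : ℤ, k + 1 ≤ 0 → T1 (k+1) = Q (k+1) (w k) + A k (T1 k) := by
    intro k hk
    have hsk1 := (hh1S (k+1) hk).1
    have hsk := (hh1S k (by omega)).1
    have hA' : A k (T1 k)
        = ∑' j : ℕ, Phi A (k+1) (k-(j:ℤ)) (Q (k-(j:ℤ)) (w (k-(j:ℤ)-1))) := by
      simp only [hT1]
      rw [(A k).map_tsum]
      exact tsum_congr fun j => (phi_succ_apply A k _ _).symm
    rw [hA']
    simp only [hT1]
    rw [Summable.tsum_eq_zero_add hsk1]
    congr 1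
    · have e0 : Phi A (k+1) ((k+1)-((0:ℕ):ℤ)) (Q ((k+1)-((0:ℕ):ℤ)) (w ((k+1)-((0:ℕ):ℤ)-1)))
          = Phi A (k+1) (k+1) (Q (k+1) (w k)) :=
        congrQ1 _ _ _ _ _ (by simp) (by push_cast; ring)
      rw [e0, phi_self_apply]
    · exact tsum_congr fun j => congrQ1 (k+1) _ _ _ _ (by push_cast; ring) (by push_cast; ring)
  have hrecT2 : ∀ k : ℤ, k + 1 ≤ 0 → A k (T2 k) = (w k - Q (k+1) (w k)) + T2 (k+1) := by
    intro k hk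
    have hn : (-k).toNat = (-(k+1)).toNat + 1 := by omega
    have e0 : A k (Phi A k (k+1+((0:ℕ):ℤ)) ((1 - Q (k+1+((0:ℕ):ℤ))) (w (k+((0:ℕ):ℤ)))))
        = w k - Q (k+1) (w k) := by
      rw [← phi_succ_apply]
      have e := congrQ2 (k+1) (k+1+((0:ℕ):ℤ)) (k+1) (k+((0:ℕ):ℤ)) k (by simp) (by simp)
      rw [e, phi_self_apply]
      simp [ContinuousLinearMap.sub_apply]
    have eS : ∑ j ∈ Finset.range (-(k+1)).toNat,
          A k (Phi A k (k+1+((j+1:ℕ):ℤ)) ((1 - Q (k+1+((j+1:ℕ):ℤ))) (w (k+((j+1:ℕ):ℤ)))))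
        = T2 (k+1) := by
      simp only [hT2]
      refine Finset.sum_congr rfl fun j hj => ?_
      rw [← phi_succ_apply]
      exact congrQ2 (k+1) _ _ _ _ (by push_cast; ring) (by push_cast; ring)
    simp only [hT2]
    rw [map_sum, hn, Finset.sum_range_succ']
    simp only [hT2] at eS
    rw [e0, eS]
    abel
  -- key backward step
  have hkey : ∀ k : ℤ, k + 1 ≤ 0 →
      T1 (k+1) - T2 (k+1) + Phi A (k+1) 0 y = A k (v k) + w k := by
    intro k hk
    have hvk : v k = T1 k - T2 k + Phi A k 0 y := by
      simp only [hv]; rw [if_neg (by omega)]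
    rw [hvk, map_add, map_sub, hrecT1 k hk, phi_succ_apply A k 0 y]
    have h2' : T2 (k+1) = A k (T2 k) - (w k - Q (k+1) (w k)) := by
      rw [hrecT2 k hk]; abel
    rw [h2']
    abel
  refine ⟨v, ⟨(C₁*W)*(1-l₁)⁻¹ + (C₁*W)*(1-l₁)⁻¹ + Mx
      + ((C₂*W)*(1-l₂)⁻¹ + (C₂*W)*(1-l₂)⁻¹ + My), ?_⟩, ?_⟩
  · -- boundedness
    intro k
    have hD₁ : (0:ℝ) ≤ (C₁*W)*(1-l₁)⁻¹ := by
      have : (0:ℝ) ≤ (1-l₁)⁻¹ := inv_nonneg.mpr (by linarith)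
      positivity
    have hD₂ : (0:ℝ) ≤ (C₂*W)*(1-l₂)⁻¹ := by
      have : (0:ℝ) ≤ (1-l₂)⁻¹ := inv_nonneg.mpr (by linarith)
      positivity
    by_cases hk : 0 ≤ k
    · have hvk : v k = S1 k - S2 k - Phi A k 0 x := by
        simp only [hv]; rw [if_pos hk]
      rw [hvk]
      have b1 := hS1b k hk
      have b2 := (hg2S k hk).2
      have b3 := hMx k hk
      calc ‖S1 k - S2 k - Phi A k 0 x‖ ≤ ‖S1 k - S2 k‖ + ‖Phi A k 0 x‖ := norm_sub_le _ _
        _ ≤ ‖S1 k‖ + ‖S2 k‖ + ‖Phi A k 0 x‖ := by linarith [norm_sub_le (S1 k) (S2 k)]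
        _ ≤ _ := by linarith
    · push_neg at hk
      have hvk : v k = T1 k - T2 k + Phi A k 0 y := by
        simp only [hv]; rw [if_neg (by omega)]
      rw [hvk]
      have b1 := (hh1S k hk.le).2
      have b2 := hT2b k hk.le
      have b3 := hMy k hk.le
      calc ‖T1 k - T2 k + Phi A k 0 y‖ ≤ ‖T1 k - T2 k‖ + ‖Phi A k 0 y‖ := norm_add_le _ _
        _ ≤ ‖T1 k‖ + ‖T2 k‖ + ‖Phi A k 0 y‖ := by linarith [norm_sub_le (T1 k) (T2 k)]
        _ ≤ _ := by linarith
  · -- the recurrence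
    intro k
    by_cases hk : 0 ≤ k
    · have hvk : v k = S1 k - S2 k - Phi A k 0 x := by
        simp only [hv]; rw [if_pos hk]
      have hvk1 : v (k+1) = S1 (k+1) - S2 (k+1) - Phi A (k+1) 0 x := by
        simp only [hv]; rw [if_pos (by omega)]
      rw [hvk, hvk1, map_sub, map_sub, hrecS1 k hk, phi_succ_apply A k 0 x]
      have h2' : S2 (k+1) = A k (S2 k) - (w k - P (k+1) (w k)) := by
        rw [hrecS2 k hk]; abel
      rw [h2']
      abel
    · push_neg at hk
      have hk1 : k + 1 ≤ 0 := by omega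
      have hK := hkey k hk1
      by_cases h0 : k + 1 = 0
      · rw [h0] at hK ⊢
        rw [← hK]
        have hv0 : v 0 = S1 0 - S2 0 - Phi A 0 0 x := by
          simp only [hv]; rw [if_pos le_rfl]
        rw [hv0, phi_self_apply, phi_self_apply]
        have hS10 : S1 0 = 0 := by simp [hS1]
        have hT20 : T2 0 = 0 := by simp [hT2]
        rw [hS10, hT20]
        have hy2 : y = -(S2 0) - T1 0 - x := by
          rw [hxy]; abel
        rw [hy2]
        abel
      · have hvk1 : v (k+1) = T1 (k+1) - T2 (k+1) + Phi A (k+1) 0 y := by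
          simp only [hv]; rw [if_neg (by omega)]
        rw [hvk1]
        exact hK
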